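/- Let C be a small category satisfying (C1), (C2) and (C3), and suppose every morphism of C is definable by self-intersections. Then for every object A of C and every subgroup G of Aut_C(A), the presheaf on C^op given on objects by X ↦ Hom_C(A, X)∕G, the quotient of the hom-set by the action of G by precomposition, is a sheaf for the atomic topology J_at on C^op. -/

import Mathlib

open CategoryTheory Limits Opposite

universe w v u

/-- A chain indexed by a preorder stabilizes if there is an index from which on
all the morphisms of the chain are isomorphisms. -/
def ChainStabilizes {J : Type w} [Preorder J] {C : Type u} [Category.{v} C]
    (F : J ⥤ C) : Prop :=
  ∃ i : J, ∀ j : J, ∀ h : i ≤ j, IsIso (F.map (homOfLE h))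

/-- A category is co-well-founded if every chain indexed by a (nonempty) well-ordered
poset stabilizes. -/
def CoWellFounded (C : Type u) [Category.{v} C] : Prop :=
  ∀ (J : Type w) (_ : LinearOrder J) (_ : WellFoundedLT J) (_ : Nonempty J)
    (F : J ⥤ C), ChainStabilizes F

/-- An object is finitely presentable if its covariant Hom functor preserves
filtered colimits. -/
def IsFinitelyPresentableObj {C : Type u} [Category.{v} C] (X : C) : Prop :=
  ∀ (J : Type w) (_ : SmallCategory J) (_ : IsFiltered J),
    Nonempty (PreservesColimitsOfShape J (coyoneda.obj (op X)))

/-- A category is locally finitely presentable if it is cocomplete and there is a small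
family of finitely presentable objects such that every object is a filtered colimit of
objects of this family. -/
def LocallyFinitelyPresentable (C : Type u) [Category.{v} C] : Prop :=
  HasColimitsOfSize.{w, w} C ∧
  ∃ (ι : Type w) (G : ι → C),
    (∀ i, IsFinitelyPresentableObj.{w} (G i)) ∧
    ∀ X : C, ∃ (J : Type w) (_ : SmallCategory J) (_ : IsFiltered J) (D : J ⥤ C)
      (c : Cocone D), Nonempty (IsColimit c) ∧ Nonempty (c.pt ≅ X) ∧
      ∀ j : J, ∃ i : ι, Nonempty (D.obj j ≅ G i)

/-- An atom of a topos: an object which is not initial and whose only subobjects are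
the initial one and itself. -/
def IsAtomObj {C : Type u} [Category.{v} C] [HasInitial C] (X : C) : Prop :=
  (¬ Nonempty (X ≅ ⊥_ C)) ∧
  ∀ S : Subobject X, Nonempty ((S : C) ≅ ⊥_ C) ∨ S = ⊤

/-- A category has amalgamation (the left Ore condition) if every span admits a cocone. -/
def HasAmalgamation (C : Type u) [Category.{v} C] : Prop :=
  ∀ {X A B : C} (f : X ⟶ A) (g : X ⟶ B), ∃ (W : C) (h : A ⟶ W) (k : B ⟶ W), f ≫ h = g ≫ k

/-- `J` is the atomic topology: its covering sieves are exactly the nonempty sieves. -/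
def IsAtomicTopology {C : Type u} [Category.{v} C] (J : GrothendieckTopology C) : Prop :=
  ∀ (X : C) (S : Sieve X), S ∈ J X ↔ ∃ (Y : C) (f : Y ⟶ X), S f

/-- Condition (C2'): for every pullback square `X∩Y → X → Z`, `X∩Y → Y → Z` and every
pair `u, v : Z ⇉ A` agreeing on `X∩Y`, there are `w : A → A'` and a finite sequence of
morphisms `Z → A'` from `u ≫ w` to `v ≫ w` in which consecutive morphisms agree on `X`
or on `Y`. -/
def CondC2' (C : Type u) [Category.{v} C] : Prop :=
  ∀ {W X Y Z : C} (fst : W ⟶ X) (snd : W ⟶ Y) (f : X ⟶ Z) (g : Y ⟶ Z),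
    IsPullback fst snd f g →
    ∀ {A : C} (u v : Z ⟶ A), (fst ≫ f) ≫ u = (fst ≫ f) ≫ v →
      ∃ (A' : C) (w : A ⟶ A') (n : ℕ) (k : Fin (n + 1) → (Z ⟶ A')),
        k 0 = u ≫ w ∧ k (Fin.last n) = v ≫ w ∧
        ∀ i : Fin n, f ≫ k i.castSucc = f ≫ k i.succ ∨ g ≫ k i.castSucc = g ≫ k i.succ
universe v₂ u₂

/-- The composite of the Yoneda embedding `Cᵒᵖ ⥤ (Cᵒᵖᵒᵖ ⥤ Type u)` with sheafification
for a topology `J` on `Cᵒᵖ`. -/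
noncomputable def atomicYoneda {C : Type u} [SmallCategory C]
    (J : GrothendieckTopology Cᵒᵖ) : Cᵒᵖ ⥤ Sheaf J (Type u) :=
  yoneda ⋙ presheafToSheaf J (Type u)

/-- Port helper: the initial object of `Sheaf J (Type u)`, given explicitly because instance
search now runs forever on it. -/
instance atomicSheafHasInitial {C : Type u} [SmallCategory C] (J : GrothendieckTopology Cᵒᵖ) :
    HasInitial (Sheaf J (Type u)) :=
  Sheaf.instHasColimitsOfShape

/-- Condition (C1): the composite of Yoneda with sheafification is fully faithful and
sends every object of `Cᵒᵖ` to an atom. -/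
def CondC1 {C : Type u} [SmallCategory C] (J : GrothendieckTopology Cᵒᵖ) : Prop :=
  Nonempty (atomicYoneda J).FullyFaithful ∧
  ∀ n : Cᵒᵖ, IsAtomObj ((atomicYoneda J).obj n)

/-- Condition (C2): `Cᵒᵖ` has pushouts and the composite of Yoneda with sheafification
preserves them. -/
def CondC2 {C : Type u} [SmallCategory C] (J : GrothendieckTopology Cᵒᵖ) : Prop :=
  HasPushouts Cᵒᵖ ∧
  ∀ {W X Y Z : Cᵒᵖ} (f : W ⟶ X) (g : W ⟶ Y) (inl : X ⟶ Z) (inr : Y ⟶ Z),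
    IsPushout f g inl inr →
    IsPushout ((atomicYoneda J).map f) ((atomicYoneda J).map g)
      ((atomicYoneda J).map inl) ((atomicYoneda J).map inr)

/-- Condition (C3): `C` is well-founded, i.e. `Cᵒᵖ` is co-well-founded. -/
def CondC3 (C : Type u) [SmallCategory C] : Prop :=
  CoWellFounded.{u} Cᵒᵖ

/-- Condition (C4): the automorphism group of every object of `C` is Noetherian: every
ascending chain of subgroups stabilizes. -/
def CondC4 (C : Type u) [SmallCategory C] : Prop :=
  ∀ X : C, ∀ c : ℕ → Subgroup (Aut X), Monotone c → ∃ N, ∀ n, N ≤ n → c n = c N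

/-- `π : L.obj m ⟶ Q` exhibits `Q` as the quotient of `L.obj m` by the subgroup
`G ⊆ Aut m`, i.e. as the common coequalizer of all the pairs `(L.map σ, id)`, `σ ∈ G`. -/
def IsGroupQuotientAlong {C : Type u} [Category.{v} C] {D : Type u₂} [Category.{v₂} D]
    (L : C ⥤ D) {m : C} (G : Subgroup (Aut m)) {Q : D} (π : L.obj m ⟶ Q) : Prop :=
  (∀ σ ∈ G, L.map σ.hom ≫ π = π) ∧
  ∀ (Q' : D) (π' : L.obj m ⟶ Q'), (∀ σ ∈ G, L.map σ.hom ≫ π' = π') →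
    ∃! t : Q ⟶ Q', π ≫ t = π'

/-- A morphism `f : A ⟶ B` is definable by self-intersections: every `u : Y ⟶ B` such
that, for all pairs `α, β : B ⇉ X` equalized by `f`, `u ≫ β` factors as `v ≫ α`,
factors through `f`. -/
def DefinableBySelfIntersections {C : Type u} [Category.{v} C] {A B : C}
    (f : A ⟶ B) : Prop :=
  ∀ {Y : C} (u : Y ⟶ B),
    (∀ {X : C} (α β : B ⟶ X), f ≫ α = f ≫ β → ∃ v : Y ⟶ B, u ≫ β = v ≫ α) →
    ∃ t : Y ⟶ A, t ≫ f = u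

/-- The presheaf on `Cᵒᵖ` sending `X` to the quotient `Hom_C(A, X)∕G` of the hom-set by
the precomposition action of a subgroup `G ⊆ Aut A`. -/
def homQuotPre {C : Type u} [Category.{v} C] (A : C) (G : Subgroup (Aut A)) :
    (Cᵒᵖ)ᵒᵖ ⥤ Type v where
  obj X := Quot (fun f g : (A ⟶ X.unop.unop) => ∃ σ ∈ G, σ.hom ≫ f = g)
  map u := TypeCat.ofHom (Quot.map (fun f => f ≫ u.unop.unop)
    (by rintro f g ⟨σ, hσ, rfl⟩; exact ⟨σ, hσ, by simp⟩))
  map_id X := by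
    refine ConcreteCategory.hom_ext _ _ fun x => ?_
    obtain ⟨f, rfl⟩ := Quot.exists_rep x
    show Quot.mk _ (f ≫ (𝟙 X).unop.unop) = Quot.mk _ f
    simp
  map_comp u v := by
    refine ConcreteCategory.hom_ext _ _ fun x => ?_
    obtain ⟨f, rfl⟩ := Quot.exists_rep x
    show Quot.mk _ (f ≫ (u ≫ v).unop.unop) = Quot.mk _ ((f ≫ u.unop.unop) ≫ v.unop.unop)
    simp


namespace Stmt8Aux

open CategoryTheory.GrothendieckTopology

variable {C : Type u} [SmallCategory C] {J : GrothendieckTopology Cᵒᵖ}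

/-- The right Ore condition in `Cᵒᵖ`, derived from the existence of the atomic topology. -/
lemma ore (hJ : IsAtomicTopology J) {X Y Z : Cᵒᵖ} (f : Y ⟶ X) (g : Z ⟶ X) :
    ∃ (W : Cᵒᵖ) (p : W ⟶ Z) (q : W ⟶ Y), p ≫ g = q ≫ f := by
  have hmem : Sieve.generate (Presieve.singleton f) ∈ J X :=
    (hJ X _).2 ⟨Y, f, ⟨Y, 𝟙 Y, f, Presieve.singleton.mk, Category.id_comp f⟩⟩
  obtain ⟨W, p, hp⟩ := (hJ Z _).1 (J.pullback_stable g hmem)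
  obtain ⟨T, q, f', hf', comm⟩ := hp
  cases hf'
  exact ⟨W, p, q, comm.symm⟩

/-- Under (C1), the image under `atomicYoneda J` of any morphism of `Cᵒᵖ` is an
epimorphism: its image is a subobject of an atom, and it cannot be initial since its
domain, an atom, would then map to a strict initial object. -/
lemma epi_ell (h1 : CondC1 J) {M N : Cᵒᵖ} (g : N ⟶ M) :
    Epi ((atomicYoneda J).map g) := by
  set φ := (atomicYoneda J).map g with hφ
  rcases (h1.2 M).2 (Subobject.mk (Sheaf.imageι φ)) with h | h
  · exfalso
    obtain ⟨e⟩ := h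
    exact (h1.2 N).1
      ⟨asIso (Sheaf.toImage φ ≫ (Subobject.underlyingIso (Sheaf.imageι φ)).inv ≫ e.hom)⟩
  · have : IsIso (Sheaf.imageι φ) := by
      rw [Subobject.isIso_iff_mk_eq_top]; exact h
    rw [← Sheaf.toImage_ι φ]
    exact epi_comp _ _

/-- Under (C1), every morphism of `C` is a monomorphism. -/
lemma cancel (h1 : CondC1 J) {X Y W : C} (f : X ⟶ Y) (a b : W ⟶ X)
    (h : a ≫ f = b ≫ f) : a = b := by
  obtain ⟨FF⟩ := h1.1
  have : (atomicYoneda J).Faithful := FF.faithful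
  have hepi' : Epi ((atomicYoneda J).map f.op) := epi_ell h1 f.op
  have hepi : Epi f.op := (atomicYoneda J).epi_of_epi_map hepi'
  have hc : f.op ≫ a.op = f.op ≫ b.op := by
    rw [← op_comp, ← op_comp, h]
  exact Quiver.Hom.op_inj ((cancel_epi f.op).1 hc)

/-- The relation defining `homQuotPre` is an equivalence relation. -/
lemma rel_equiv {A : C} (G : Subgroup (Aut A)) (Z : C) :
    Equivalence (fun f g : A ⟶ Z => ∃ σ ∈ G, σ.hom ≫ f = g) := by
  constructor
  · exact fun f => ⟨1, G.one_mem, Category.id_comp f⟩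
  · rintro f g ⟨σ, hσ, rfl⟩
    refine ⟨σ⁻¹, G.inv_mem hσ, ?_⟩
    rw [← Category.assoc, Aut.Aut_inv_def]
    change (σ.inv ≫ σ.hom) ≫ f = f
    exact (Category.assoc _ _ _).trans (Iso.inv_hom_id_assoc (σ : A ≅ A) f)
  · rintro f g h ⟨σ, hσ, rfl⟩ ⟨τ, hτ, rfl⟩
    refine ⟨σ * τ, G.mul_mem hσ hτ, ?_⟩
    rw [Aut.Aut_mul_def]
    exact Category.assoc τ.hom σ.hom f

/-- Separation: postcomposition with a morphism is injective on the quotients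
`Hom(A, -)∕G`, because every morphism of `C` is mono. -/
lemma quot_inj (h1 : CondC1 J) {A Z W : C} {G : Subgroup (Aut A)} (g : Z ⟶ W)
    {a b : A ⟶ Z}
    (h : Quot.mk (fun f g : A ⟶ W => ∃ σ ∈ G, σ.hom ≫ f = g) (a ≫ g)
       = Quot.mk (fun f g : A ⟶ W => ∃ σ ∈ G, σ.hom ≫ f = g) (b ≫ g)) :
    Quot.mk (fun f g : A ⟶ Z => ∃ σ ∈ G, σ.hom ≫ f = g) a
      = Quot.mk (fun f g : A ⟶ Z => ∃ σ ∈ G, σ.hom ≫ f = g) b := by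
  obtain ⟨σ, hσ, e⟩ := ((rel_equiv G W).eqvGen_iff).1 (Quot.eq.1 h)
  refine Quot.sound ⟨σ, hσ, cancel h1 g _ _ ?_⟩
  rw [Category.assoc]
  exact e

end Stmt8Aux

/-- under (C1), (C2), (C3), if every morphism of `C` is definable by
self-intersections, then for every object `A` and subgroup `G ⊆ Aut A` the presheaf
`X ↦ Hom_C(A, X)∕G` is a sheaf for the atomic topology on `Cᵒᵖ`. -/
theorem stmt8 {C : Type u} [SmallCategory C] (J : GrothendieckTopology Cᵒᵖ)
    (hJ : IsAtomicTopology J)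
    (h1 : CondC1 J) (h2 : CondC2 J) (h3 : CondC3 C)
    (hdef : ∀ {A B : C} (f : A ⟶ B), DefinableBySelfIntersections f) :
    ∀ (A : C) (G : Subgroup (Aut A)), Presheaf.IsSheaf J (homQuotPre A G) := by
  intro A G
  rw [isSheaf_iff_isSheaf_of_type]
  intro X S hS x hx
  obtain ⟨Y₀, f₀, hf₀⟩ := (hJ X S).1 hS
  obtain ⟨u₀, hu₀⟩ := Quot.exists_rep (x f₀ hf₀)
  obtain ⟨t, ht⟩ := hdef f₀.unop u₀ (by
    intro Z α β hαβ
    have comm : (α.op : op Z ⟶ Y₀) ≫ f₀ = (β.op : op Z ⟶ Y₀) ≫ f₀ := by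
      apply Quiver.Hom.unop_inj
      simpa using hαβ
    have hcomp := hx (α.op : op Z ⟶ Y₀) (β.op : op Z ⟶ Y₀) hf₀ hf₀ comm
    rw [← hu₀] at hcomp
    have hcomp' : Quot.mk (fun a b : A ⟶ Z => ∃ σ ∈ G, σ.hom ≫ a = b) (u₀ ≫ α)
        = Quot.mk (fun a b : A ⟶ Z => ∃ σ ∈ G, σ.hom ≫ a = b) (u₀ ≫ β) := hcomp
    obtain ⟨σ, hσ, e⟩ := ((Stmt8Aux.rel_equiv G Z).eqvGen_iff).1 (Quot.eq.1 hcomp')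
    refine ⟨σ.hom ≫ u₀, ?_⟩
    rw [Category.assoc]
    exact e.symm)
  refine ⟨Quot.mk _ t, ?_, ?_⟩
  · intro Y f hf
    obtain ⟨W, p, q, hpq⟩ := Stmt8Aux.ore hJ f₀ f
    obtain ⟨uf, huf⟩ := Quot.exists_rep (x f hf)
    have key := hx p q hf hf₀ hpq
    rw [← huf, ← hu₀] at key
    have key' : Quot.mk (fun a b : A ⟶ W.unop => ∃ σ ∈ G, σ.hom ≫ a = b) (uf ≫ p.unop)
        = Quot.mk (fun a b : A ⟶ W.unop => ∃ σ ∈ G, σ.hom ≫ a = b) (u₀ ≫ q.unop) := key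
    have e2 : u₀ ≫ q.unop = (t ≫ f.unop) ≫ p.unop := by
      have h3' : (q ≫ f₀).unop = (p ≫ f).unop := by rw [hpq]
      simp only [unop_comp] at h3'
      rw [← ht, Category.assoc, h3', ← Category.assoc]
    have key'' : Quot.mk (fun a b : A ⟶ W.unop => ∃ σ ∈ G, σ.hom ≫ a = b) (uf ≫ p.unop)
        = Quot.mk (fun a b : A ⟶ W.unop => ∃ σ ∈ G, σ.hom ≫ a = b)
            ((t ≫ f.unop) ≫ p.unop) := by
      rw [key', e2]
    rw [← huf]
    exact (Stmt8Aux.quot_inj h1 p.unop key'').symm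
  · intro T' hT'
    obtain ⟨s, hs⟩ := Quot.exists_rep T'
    have hamal := hT' f₀ hf₀
    rw [← hs, ← hu₀] at hamal
    rw [← hs]
    refine Stmt8Aux.quot_inj h1 f₀.unop ?_
    rw [ht]
    exact hamal
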